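/- arXiv:2601.10111 — 7 statements merged into one kernel-verified Lean document; each statement's English description precedes it below -/
import Mathlib

section
/- Let t ≥ 1 be a natural number, p a real number with 0 < p < 1, and k a natural number with t·p ≤ k + 1 and k + 1 < t. Then the binomial upper tail satisfies ∑_{j=k+1}^{t} (t choose j) · p^j · (1−p)^{t−j} ≤ exp(−t · D((k+1)/t ‖ p)). -/
/-- Kullback–Leibler divergence of Bernoulli distributions. -/
noncomputable def klBern (a p : ℝ) : ℝ :=
  a * Real.log (a / p) + (1 - a) * Real.log ((1 - a) / (1 - p))

theorem stmt_0 (t k : ℕ) (p : ℝ) (ht : 1 ≤ t) (hp0 : 0 < p) (hp1 : p < 1)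
    (hk1 : (t : ℝ) * p ≤ (k : ℝ) + 1) (hk2 : k + 1 < t) :
    ∑ j ∈ Finset.Icc (k + 1) t, (t.choose j : ℝ) * p ^ j * (1 - p) ^ (t - j)
      ≤ Real.exp (-(t : ℝ) * klBern (((k : ℝ) + 1) / (t : ℝ)) p) := by
  have ht0 : (0:ℝ) < t := by exact_mod_cast Nat.pos_of_ne_zero (by omega)
  set a : ℝ := ((k : ℝ) + 1) / (t : ℝ) with ha_def
  have ha0 : 0 < a := by positivity
  have hta : (t : ℝ) * a = (k : ℝ) + 1 := by
    rw [ha_def]; field_simp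
  have ha1 : a < 1 := by
    rw [ha_def, div_lt_one ht0]
    exact_mod_cast hk2
  have hpa : p ≤ a := by
    rw [ha_def, le_div_iff₀ ht0]
    linarith [hk1]
  have h1p : (0:ℝ) < 1 - p := by linarith
  have h1a : (0:ℝ) < 1 - a := by linarith
  set r : ℝ := a * (1 - p) / ((1 - a) * p) with hr_def
  have hr0 : 0 < r := by positivity
  have hr1 : 1 ≤ r := by
    rw [hr_def, le_div_iff₀ (by positivity)]
    nlinarith
  have hpr : p * r + (1 - p) = (1 - p) / (1 - a) := by
    rw [hr_def]; field_simp; ring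
  -- step 1: each term is ≤ term * r^(j-(k+1))
  have step1 : ∑ j ∈ Finset.Icc (k + 1) t, (t.choose j : ℝ) * p ^ j * (1 - p) ^ (t - j)
      ≤ ∑ j ∈ Finset.Icc (k + 1) t,
        (1 / r ^ (k+1)) * ((p * r) ^ j * (1 - p) ^ (t - j) * (t.choose j : ℝ)) := by
    apply Finset.sum_le_sum
    intro j hj
    obtain ⟨hj1, hj2⟩ := Finset.mem_Icc.mp hj
    have hrpow : r ^ (j - (k+1)) = r ^ j / r ^ (k+1) :=
      pow_sub₀ r (ne_of_gt hr0) hj1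
    have h1 : (t.choose j : ℝ) * p ^ j * (1 - p) ^ (t - j)
        ≤ (t.choose j : ℝ) * p ^ j * (1 - p) ^ (t - j) * r ^ (j - (k+1)) := by
      apply le_mul_of_one_le_right (by positivity)
      exact one_le_pow₀ hr1
    calc (t.choose j : ℝ) * p ^ j * (1 - p) ^ (t - j)
        ≤ (t.choose j : ℝ) * p ^ j * (1 - p) ^ (t - j) * r ^ (j - (k+1)) := h1
      _ = (1 / r ^ (k+1)) * ((p * r) ^ j * (1 - p) ^ (t - j) * (t.choose j : ℝ)) := by
          rw [hrpow, mul_pow]; field_simp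
  -- step 2: extend the sum and use the binomial theorem
  have step2 : ∑ j ∈ Finset.Icc (k + 1) t,
        (1 / r ^ (k+1)) * ((p * r) ^ j * (1 - p) ^ (t - j) * (t.choose j : ℝ))
      ≤ (1 / r ^ (k+1)) * (p * r + (1 - p)) ^ t := by
    rw [add_pow, ← Finset.mul_sum]
    apply mul_le_mul_of_nonneg_left _ (by positivity)
    apply Finset.sum_le_sum_of_subset_of_nonneg
    · intro j hj
      simp only [Finset.mem_Icc] at hj
      simp only [Finset.mem_range]
      omega
    · intro j _ _
      positivity
  -- step 3: the bound equals the exponential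
  have step3 : (1 / r ^ (k+1)) * (p * r + (1 - p)) ^ t
      = Real.exp (-(t : ℝ) * klBern a p) := by
    rw [hpr]
    have e0 : Real.exp (((k+1:ℕ):ℝ) * Real.log r) = r ^ (k+1) := by
      rw [Real.exp_nat_mul, Real.exp_log hr0]
    have e1 : (1 : ℝ) / r ^ (k+1) = Real.exp (-(((k:ℝ)+1) * Real.log r)) := by
      rw [show (-(((k:ℝ)+1) * Real.log r)) = -(((k+1:ℕ):ℝ) * Real.log r) by
        push_cast; ring, Real.exp_neg, e0, one_div]
    have e2 : ((1 - p) / (1 - a)) ^ t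
        = Real.exp ((t : ℝ) * Real.log ((1 - p) / (1 - a))) := by
      rw [Real.exp_nat_mul, Real.exp_log (by positivity)]
    rw [e1, e2, ← Real.exp_add]
    congr 1
    have lr : Real.log r = Real.log a + Real.log (1 - p) - Real.log (1 - a) - Real.log p := by
      rw [hr_def, Real.log_div (by positivity) (by positivity),
        Real.log_mul (ne_of_gt ha0) (ne_of_gt h1p),
        Real.log_mul (ne_of_gt h1a) (ne_of_gt hp0)]
      ring
    rw [lr, klBern, Real.log_div (ne_of_gt h1p) (ne_of_gt h1a),
      Real.log_div (ne_of_gt ha0) (ne_of_gt hp0),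
      Real.log_div (ne_of_gt h1a) (ne_of_gt h1p)]
    linear_combination (Real.log a - Real.log p + Real.log (1 - p) - Real.log (1 - a)) * hta
  calc ∑ j ∈ Finset.Icc (k + 1) t, (t.choose j : ℝ) * p ^ j * (1 - p) ^ (t - j)
      ≤ (1 / r ^ (k+1)) * (p * r + (1 - p)) ^ t := le_trans step1 step2
    _ = Real.exp (-(t : ℝ) * klBern a p) := step3
end

section
/- Let m ≥ 1 and 0 ≤ l ≤ m be natural numbers, let c be a real number, and let 𝒮 denote the (finite) set of all ZMod 2–submodules of (ZMod 2)^m of rank l. Then ( ∑_{L ∈ 𝒮} ∑_{x ∈ L} c^{wt(x)} ) · (2^m − 1) = |𝒮| · ( (2^m − 1) + (2^l − 1) · ((1 + c)^m − 1) ). Equivalently, the average over uniformly random l-dimensional subspaces L of Z(L) := ∑_{x ∈ L} c^{wt(x)} equals 1 + ((2^l − 1)/(2^m − 1)) · ((1+c)^m − 1). -/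
open scoped Classical

/-- Hamming weight of a vector over `ZMod 2`. -/
def wt {m : ℕ} (x : Fin m → ZMod 2) : ℕ :=
  (Finset.univ.filter fun i => x i ≠ 0).card

noncomputable instance (m : ℕ) : Fintype (Submodule (ZMod 2) (Fin m → ZMod 2)) :=
  Fintype.ofInjective (fun L => (L : Set (Fin m → ZMod 2))) SetLike.coe_injective

namespace Stmt3Aux

abbrev V (m : ℕ) := Fin m → ZMod 2

noncomputable def Fam (m l : ℕ) : Finset (Submodule (ZMod 2) (V m)) :=
  Finset.univ.filter fun L => Module.finrank (ZMod 2) L = l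

noncomputable def fcount (m l : ℕ) (x : V m) : ℕ :=
  ((Fam m l).filter fun L => x ∈ L).card

lemma fcount_equiv (m l : ℕ) (e : V m ≃ₗ[ZMod 2] V m) (x : V m) :
    fcount m l (e x) = fcount m l x := by
  unfold fcount Fam
  apply Finset.card_bij' (fun L _ => Submodule.map (e.symm : V m →ₗ[ZMod 2] V m) L)
    (fun L _ => Submodule.map (e : V m →ₗ[ZMod 2] V m) L)
  · intro L hL
    simp only [Finset.mem_filter, Finset.mem_univ, true_and] at hL ⊢
    constructor
    · rw [LinearEquiv.finrank_map_eq]; exact hL.1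
    · rw [Submodule.mem_map_equiv]
      simpa using hL.2
  · intro L hL
    simp only [Finset.mem_filter, Finset.mem_univ, true_and] at hL ⊢
    constructor
    · rw [LinearEquiv.finrank_map_eq]; exact hL.1
    · rw [Submodule.mem_map_equiv]
      simpa using hL.2
  · intro L hL
    simp [← Submodule.map_comp]
  · intro L hL
    simp [← Submodule.map_comp]

lemma exists_equiv_single (m : ℕ) (x : V m) (hx : x ≠ 0) :
    ∃ i : Fin m, ∃ e : V m ≃ₗ[ZMod 2] V m, e x = Pi.single i 1 := by
  have h1 : ∀ a : ZMod 2, a ≠ 0 → a = 1 := by decide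
  obtain ⟨i, hi⟩ : ∃ i, x i ≠ 0 := by
    by_contra h
    push_neg at h
    exact hx (funext fun i => h i)
  have hxi : x i = 1 := h1 _ hi
  set w : V m := x + Pi.single i 1 with hw
  have hwi : w i = 0 := by
    simp [hw, hxi, Pi.single_apply]
    decide
  set T : V m →ₗ[ZMod 2] V m := LinearMap.id + (LinearMap.proj i).smulRight w with hT
  have hTv : ∀ v : V m, T v = v + v i • w := by
    intro v; simp [hT]
  have haddself : ∀ a : ZMod 2, a + a = 0 := by decide
  have hinv : Function.Involutive T := by
    intro v
    rw [hTv, hTv]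
    have : (v + v i • w) i = v i := by
      simp [hwi]
    rw [this, add_assoc, ← add_smul, haddself, zero_smul, add_zero]
  refine ⟨i, LinearEquiv.ofInvolutive T hinv, ?_⟩
  show T x = Pi.single i 1
  rw [hTv, hxi, one_smul, hw, ← add_assoc]
  have hxx : x + x = 0 := funext fun j => haddself (x j)
  rw [hxx, zero_add]

lemma fcount_single (m l : ℕ) (i j : Fin m) :
    fcount m l (Pi.single i (1 : ZMod 2)) = fcount m l (Pi.single j 1) := by
  have key : (LinearEquiv.funCongrLeft (ZMod 2) (ZMod 2) (Equiv.swap i j))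
      (Pi.single j (1 : ZMod 2)) = Pi.single i 1 := by
    funext k
    simp only [LinearEquiv.funCongrLeft_apply, LinearMap.funLeft_apply, Pi.single_apply]
    by_cases h : k = i
    · subst h; simp [Equiv.swap_apply_left]
    · by_cases h' : k = j
      · rw [h', Equiv.swap_apply_right]
        rcases eq_or_ne i j with hij | hij
        · simp [hij]
        · simp [hij, hij.symm, h']
      · rw [Equiv.swap_apply_of_ne_of_ne h h']
        simp [h, h']
  rw [← key, fcount_equiv]

lemma fcount_const (m l : ℕ) {x y : V m} (hx : x ≠ 0) (hy : y ≠ 0) :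
    fcount m l x = fcount m l y := by
  obtain ⟨i, e, he⟩ := exists_equiv_single m x hx
  obtain ⟨j, f, hf⟩ := exists_equiv_single m y hy
  rw [← fcount_equiv m l e x, he, ← fcount_equiv m l f y, hf]
  exact fcount_single m l i j

lemma sum_pow_wt (m : ℕ) (c : ℝ) : ∑ x : V m, c ^ wt x = (1 + c) ^ m := by
  have h1 : ∀ x : V m, c ^ wt x = ∏ i, (if x i ≠ 0 then c else 1) := by
    intro x
    rw [wt, ← Finset.prod_const, Finset.prod_filter]
  calc ∑ x : V m, c ^ wt x = ∑ x : V m, ∏ i, (if x i ≠ 0 then c else 1) := by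
        exact Finset.sum_congr rfl fun x _ => h1 x
    _ = ∏ i : Fin m, ∑ a : ZMod 2, (if a ≠ 0 then c else 1) := by
        rw [Finset.prod_univ_sum]
        rw [Fintype.piFinset_univ]
    _ = (1 + c) ^ m := by
        have : ∑ a : ZMod 2, (if a ≠ 0 then c else 1) = 1 + c := by
          rw [show (Finset.univ : Finset (ZMod 2)) = {0, 1} from by decide]
          rw [Finset.sum_insert (by decide), Finset.sum_singleton]
          norm_num
        rw [this, Finset.prod_const, Finset.card_univ, Fintype.card_fin]

lemma card_filter_mem (m l : ℕ) {L : Submodule (ZMod 2) (V m)} (hL : L ∈ Fam m l) :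
    (Finset.univ.filter fun x : V m => x ∈ L).card = 2 ^ l := by
  have hr : Module.finrank (ZMod 2) L = l := by
    simpa [Fam] using hL
  have := Module.card_eq_pow_finrank (K := ZMod 2) (V := L)
  rw [ZMod.card, hr] at this
  rw [← this, ← Fintype.card_subtype]


lemma sum_fcount (m l : ℕ) (g : V m → ℝ) :
    ∑ L ∈ Fam m l, ∑ x ∈ Finset.univ.filter (fun x : V m => x ∈ L), g x
      = ∑ x : V m, g x * fcount m l x := by
  calc ∑ L ∈ Fam m l, ∑ x ∈ Finset.univ.filter (fun x : V m => x ∈ L), g x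
      = ∑ L ∈ Fam m l, ∑ x : V m, if x ∈ L then g x else 0 :=
        Finset.sum_congr rfl fun L _ => Finset.sum_filter _ _
    _ = ∑ x : V m, ∑ L ∈ Fam m l, if x ∈ L then g x else 0 := Finset.sum_comm
    _ = ∑ x : V m, g x * fcount m l x := by
        refine Finset.sum_congr rfl fun x _ => ?_
        rw [← Finset.sum_filter, Finset.sum_const, fcount]
        simp [mul_comm]

lemma count_nonzero (m l : ℕ) :
    ∑ x ∈ (Finset.univ \ {0} : Finset (V m)), fcount m l x
      = (Fam m l).card * (2 ^ l - 1) := by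
  calc ∑ x ∈ (Finset.univ \ {0} : Finset (V m)), fcount m l x
      = ∑ x ∈ (Finset.univ \ {0} : Finset (V m)), ∑ L ∈ Fam m l, if x ∈ L then 1 else 0 := by
        refine Finset.sum_congr rfl fun x _ => ?_
        rw [fcount, Finset.card_filter]
    _ = ∑ L ∈ Fam m l, ∑ x ∈ (Finset.univ \ {0} : Finset (V m)), if x ∈ L then 1 else 0 :=
        Finset.sum_comm
    _ = ∑ L ∈ Fam m l, (2 ^ l - 1) := by
        refine Finset.sum_congr rfl fun L hL => ?_
        rw [← Finset.card_filter]
        have he : ((Finset.univ \ {0} : Finset (V m)).filter fun x => x ∈ L)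
            = (Finset.univ.filter fun x : V m => x ∈ L).erase 0 := by
          ext y
          simp [Finset.mem_erase, and_comm]
        rw [he, Finset.card_erase_of_mem (by simp [L.zero_mem]), card_filter_mem m l hL]
    _ = (Fam m l).card * (2 ^ l - 1) := by rw [Finset.sum_const, smul_eq_mul]

lemma card_V (m : ℕ) : Fintype.card (V m) = 2 ^ m := by
  simp [V]

lemma key_count (m l : ℕ) (i₀ : Fin m) :
    fcount m l (Pi.single i₀ 1) * (2 ^ m - 1) = (Fam m l).card * (2 ^ l - 1) := by
  have hne : (Pi.single i₀ 1 : Stmt3Aux.V m) ≠ 0 := by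
    intro h
    have := congrFun h i₀
    simp at this
  rw [← count_nonzero m l]
  have h : ∑ x ∈ (Finset.univ \ {0} : Finset (V m)), fcount m l x
      = ∑ x ∈ (Finset.univ \ {0} : Finset (V m)), fcount m l (Pi.single i₀ 1) := by
    refine Finset.sum_congr rfl fun x hx => ?_
    have hx0 : x ≠ 0 := by
      simp only [Finset.mem_sdiff, Finset.mem_singleton] at hx
      exact hx.2
    exact fcount_const m l hx0 hne
  rw [h, Finset.sum_const, smul_eq_mul, Finset.card_sdiff_of_subset (by simp),
    Finset.card_univ, card_V, Finset.card_singleton, mul_comm]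

end Stmt3Aux

theorem stmt_3 (m l : ℕ) (hm : 1 ≤ m) (hl : l ≤ m) (c : ℝ) :
    (∑ L ∈ Finset.univ.filter
        (fun L : Submodule (ZMod 2) (Fin m → ZMod 2) => Module.finrank (ZMod 2) L = l),
        ∑ x : L, c ^ wt (x : Fin m → ZMod 2)) * ((2 : ℝ) ^ m - 1)
      = ((Finset.univ.filter
          (fun L : Submodule (ZMod 2) (Fin m → ZMod 2) =>
            Module.finrank (ZMod 2) L = l)).card : ℝ)
        * (((2 : ℝ) ^ m - 1) + ((2 : ℝ) ^ l - 1) * ((1 + c) ^ m - 1)) := by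
  classical
  set i₀ : Fin m := ⟨0, hm⟩
  set k : ℕ := Stmt3Aux.fcount m l (Pi.single i₀ 1) with hk
  set N : ℕ := (Stmt3Aux.Fam m l).card with hN
  have hne : (Pi.single i₀ 1 : Stmt3Aux.V m) ≠ 0 := by
    intro h
    have := congrFun h i₀
    simp at this
  have hFam : (Finset.univ.filter
      (fun L : Submodule (ZMod 2) (Fin m → ZMod 2) => Module.finrank (ZMod 2) L = l))
      = Stmt3Aux.Fam m l := rfl
  rw [hFam]
  have h0 : ∀ L : Submodule (ZMod 2) (Fin m → ZMod 2),
      (∑ x : L, c ^ wt (x : Fin m → ZMod 2))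
        = ∑ x ∈ Finset.univ.filter (fun x : Stmt3Aux.V m => x ∈ L), c ^ wt x := by
    intro L
    exact (Finset.sum_subtype (Finset.univ.filter fun x : Stmt3Aux.V m => x ∈ L)
      (fun x => by simp) (fun x => c ^ wt x)).symm
  rw [Finset.sum_congr rfl fun L _ => h0 L, Stmt3Aux.sum_fcount m l]
  have hwt0 : wt (0 : Stmt3Aux.V m) = 0 := by simp [wt]
  have hf0 : Stmt3Aux.fcount m l 0 = N := by
    rw [hN, Stmt3Aux.fcount, Finset.filter_true_of_mem fun L _ => L.zero_mem]
  have hS' : ∑ x ∈ (Finset.univ \ {0} : Finset (Stmt3Aux.V m)), c ^ wt x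
      = (1 + c) ^ m - 1 := by
    have h1 := Finset.sum_eq_sum_sdiff_singleton_add (Finset.mem_univ (0 : Stmt3Aux.V m))
      (fun x => c ^ wt x)
    rw [Stmt3Aux.sum_pow_wt m c, hwt0, pow_zero] at h1
    linarith
  have hsplit : ∑ x : Stmt3Aux.V m, c ^ wt x * (Stmt3Aux.fcount m l x : ℝ)
      = (N : ℝ) + ((1 + c) ^ m - 1) * (k : ℝ) := by
    have h1 := Finset.sum_eq_sum_sdiff_singleton_add (Finset.mem_univ (0 : Stmt3Aux.V m))
      (fun x => c ^ wt x * (Stmt3Aux.fcount m l x : ℝ))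
    rw [h1, hwt0, pow_zero, hf0, one_mul]
    have h2 : ∑ x ∈ (Finset.univ \ {0} : Finset (Stmt3Aux.V m)),
        c ^ wt x * (Stmt3Aux.fcount m l x : ℝ)
        = ∑ x ∈ (Finset.univ \ {0} : Finset (Stmt3Aux.V m)), c ^ wt x * (k : ℝ) := by
      refine Finset.sum_congr rfl fun x hx => ?_
      have hx0 : x ≠ 0 := by
        simp only [Finset.mem_sdiff, Finset.mem_singleton] at hx
        exact hx.2
      rw [hk, Stmt3Aux.fcount_const m l hx0 hne]
    rw [h2, ← Finset.sum_mul, hS']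
    ring
  have hkey := Stmt3Aux.key_count m l i₀
  have hcast : (k : ℝ) * ((2 : ℝ) ^ m - 1) = (N : ℝ) * ((2 : ℝ) ^ l - 1) := by
    have h1 : (1 : ℕ) ≤ 2 ^ m := Nat.one_le_two_pow
    have h2 : (1 : ℕ) ≤ 2 ^ l := Nat.one_le_two_pow
    have h3 := congrArg (Nat.cast : ℕ → ℝ) hkey
    push_cast [Nat.cast_sub h1, Nat.cast_sub h2] at h3
    rw [← hk, ← hN] at h3
    convert h3 using 2 <;> norm_num
  rw [hsplit]
  linear_combination ((1 + c) ^ m - 1) * hcast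
end

section
/- Let H be a real inner product space, m ≥ 1 a natural number, and ν a real number with √2/2 < ν ≤ 1; set c := 2ν² − 1, so 0 < c ≤ 1. Let Φ : (ZMod 2)^m → H be a family of vectors with ⟪Φ x, Φ y⟫ = c^{wt(x + y)} for all x, y ∈ (ZMod 2)^m, and let Ψ ∈ H be a unit vector with ⟪Ψ, Φ x⟫ = ν^m for all x. Let δ be a real number with 0 < δ ≤ 1 and 2 ≤ 2^m · ν^{2m} · δ. Then there exists a ZMod 2–submodule L of (ZMod 2)^m, of rank l, such that 2^l ≤ 4 · ν^{−2m} · δ^{−1} and the vector w := ∑_{x ∈ L} Φ x satisfies ⟪Ψ, w⟫² ≥ (1 − δ) · ‖w‖². -/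
open scoped Classical RealInnerProductSpace

namespace S6

noncomputable def χ : ZMod 2 → ℝ := fun b => if b = 0 then 1 else -1
lemma χ_zero : χ 0 = 1 := by simp [χ]
lemma χ_add (x y : ZMod 2) : χ (x + y) = χ x * χ y := by
  have h01 : ∀ x : ZMod 2, x = 0 ∨ x = 1 := by decide
  rcases h01 x with rfl | rfl <;> rcases h01 y with rfl | rfl <;>
    simp [χ, show (1 + 1 : ZMod 2) = 0 from by decide]
lemma χ_sum {ι : Type*} (s : Finset ι) (f : ι → ZMod 2) :
    χ (∑ j ∈ s, f j) = ∏ j ∈ s, χ (f j) := by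
  classical
  induction s using Finset.induction_on with
  | empty => simp [χ_zero]
  | insert _ _ h ih => rw [Finset.sum_insert h, Finset.prod_insert h, χ_add, ih]
lemma sum_zmod2 (f : ZMod 2 → ℝ) : ∑ b : ZMod 2, f b = f 0 + f 1 := by
  have h : (Finset.univ : Finset (ZMod 2)) = {0, 1} := by decide
  rw [h, Finset.sum_insert (by decide), Finset.sum_singleton]
lemma sum_pi_prod {n : ℕ} (F : Fin n → ZMod 2 → ℝ) :
    ∑ z : Fin n → ZMod 2, ∏ i, F i (z i) = ∏ i, (F i 0 + F i 1) := by
  rw [← Fintype.prod_sum]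
  exact Finset.prod_congr rfl fun i _ => sum_zmod2 (F i)
lemma pow_wt {m : ℕ} (r : ℝ) (x : Fin m → ZMod 2) :
    r ^ wt x = ∏ i, (if x i = 0 then 1 else r) := by
  rw [wt, Finset.prod_ite, Finset.prod_const, Finset.prod_const, one_pow, one_mul]
lemma wt_le {m : ℕ} (x : Fin m → ZMod 2) : wt x ≤ m := by
  simpa [wt] using Finset.card_filter_le Finset.univ (fun i => x i ≠ 0)
lemma wt_eq_zero_iff {m : ℕ} (x : Fin m → ZMod 2) : wt x = 0 ↔ x = 0 := by
  rw [wt, Finset.card_eq_zero, Finset.filter_eq_empty_iff]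
  constructor
  · intro h; funext i; simpa using h (Finset.mem_univ i)
  · intro h i _; simp [h]

-- orthogonality
lemma sum_chi_dot {k : ℕ} (v : Fin k → ZMod 2) :
    ∑ u : Fin k → ZMod 2, χ (∑ j, u j * v j) = if v = 0 then (2:ℝ)^k else 0 := by
  have h1 : ∀ u : Fin k → ZMod 2, χ (∑ j, u j * v j) = ∏ j, χ (u j * v j) :=
    fun u => χ_sum _ _
  simp_rw [h1]
  rw [sum_pi_prod (fun j b => χ (b * v j))]
  by_cases hv : v = 0
  · subst hv
    simp only [Pi.zero_apply, mul_zero, χ_zero, if_pos rfl]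
    norm_num
  · rw [if_neg hv]
    obtain ⟨j0, hj0⟩ : ∃ j0, v j0 ≠ 0 := by
      by_contra h; push_neg at h; exact hv (funext fun i => h i)
    refine Finset.prod_eq_zero (Finset.mem_univ j0) ?_
    have hv1 : v j0 = 1 := by
      have : ∀ b : ZMod 2, b ≠ 0 → b = 1 := by decide
      exact this _ hj0
    rw [hv1]
    simp [χ]

section
variable {m k : ℕ} (g : Fin k → Fin m → ZMod 2)

def phi (u : Fin k → ZMod 2) : Fin m → ZMod 2 := fun i => ∑ j, u j * g j i

def Lsub : Submodule (ZMod 2) (Fin m → ZMod 2) where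
  carrier := {z | ∀ j, ∑ i, g j i * z i = 0}
  add_mem' := by
    intro z w hz hw j
    simp only [Pi.add_apply, mul_add, Finset.sum_add_distrib]
    rw [hz j, hw j, add_zero]
  zero_mem' := by intro j; simp
  smul_mem' := by
    intro r z hz j
    simp only [Pi.smul_apply, smul_eq_mul]
    have : (∑ i, g j i * (r * z i)) = r * ∑ i, g j i * z i := by
      rw [Finset.mul_sum]; exact Finset.sum_congr rfl fun i _ => by ring
    rw [this, hz j, mul_zero]

lemma mem_Lsub {z : Fin m → ZMod 2} : z ∈ Lsub g ↔ ∀ j, ∑ i, g j i * z i = 0 :=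
  Iff.rfl

lemma dot_swap (u : Fin k → ZMod 2) (z : Fin m → ZMod 2) :
    (∑ i, phi g u i * z i) = ∑ j, u j * ∑ i, g j i * z i := by
  unfold phi
  simp_rw [Finset.sum_mul, Finset.mul_sum]
  rw [Finset.sum_comm]
  exact Finset.sum_congr rfl fun j _ => Finset.sum_congr rfl fun i _ => by ring

lemma indicator (z : Fin m → ZMod 2) :
    (if z ∈ Lsub g then (2:ℝ)^k else 0)
      = ∑ u : Fin k → ZMod 2, χ (∑ i, phi g u i * z i) := by
  simp_rw [dot_swap]
  rw [sum_chi_dot (fun j => ∑ i, g j i * z i)]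
  refine if_congr ?_ rfl rfl
  rw [mem_Lsub, funext_iff]
  simp

lemma inner_sum_eval (v : Fin m → ZMod 2) (r : ℝ) :
    ∑ z : Fin m → ZMod 2, χ (∑ i, v i * z i) * r ^ wt z
      = (1+r) ^ (m - wt v) * (1-r) ^ (wt v) := by
  have h1 : ∀ z : Fin m → ZMod 2, χ (∑ i, v i * z i) * r ^ wt z
      = ∏ i, (χ (v i * z i) * (if z i = 0 then 1 else r)) := by
    intro z
    rw [χ_sum, pow_wt, ← Finset.prod_mul_distrib]
  simp_rw [h1]
  rw [sum_pi_prod (fun i b => χ (v i * b) * (if b = 0 then 1 else r))]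
  have h2 : ∀ i, (χ (v i * 0) * (if (0:ZMod 2) = 0 then (1:ℝ) else r)
      + χ (v i * 1) * (if (1:ZMod 2) = 0 then (1:ℝ) else r))
      = if v i = 0 then 1+r else 1-r := by
    intro i
    by_cases h : v i = 0 <;> simp [h, χ, sub_eq_add_neg]
  rw [Finset.prod_congr rfl fun i _ => h2 i, Finset.prod_ite, Finset.prod_const,
    Finset.prod_const]
  have h3 : (Finset.univ.filter fun i => ¬ v i = 0).card = wt v := rfl
  have h5 := Finset.card_filter_add_card_filter_not
    (s := (Finset.univ : Finset (Fin m))) (p := fun i : Fin m => v i = 0)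
  rw [Finset.card_univ, Fintype.card_fin] at h5
  have h4 : (Finset.univ.filter fun i => v i = 0).card = m - wt v := by
    rw [← h3]; omega
  rw [h3, h4]

lemma charid (r : ℝ) :
    (2:ℝ)^k * ∑ z : Lsub g, r ^ wt (z : Fin m → ZMod 2)
      = ∑ u : Fin k → ZMod 2, (1+r) ^ (m - wt (phi g u)) * (1-r) ^ (wt (phi g u)) := by
  have hA : ∑ z : Lsub g, r ^ wt (z : Fin m → ZMod 2)
      = ∑ z : Fin m → ZMod 2, if z ∈ Lsub g then r ^ wt z else 0 := by
    rw [← Finset.sum_filter, ← Finset.sum_subtype_eq_sum_filter, Finset.subtype_univ]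
  rw [hA, Finset.mul_sum]
  have hB : ∀ z, (2:ℝ)^k * (if z ∈ Lsub g then r ^ wt z else 0)
      = (∑ u : Fin k → ZMod 2, χ (∑ i, phi g u i * z i)) * r ^ wt z := by
    intro z
    rw [← indicator]
    by_cases h : z ∈ Lsub g <;> simp [h]
  simp_rw [hB, Finset.sum_mul]
  rw [Finset.sum_comm]
  exact Finset.sum_congr rfl fun u _ => inner_sum_eval (phi g u) r

lemma sumV {m : ℕ} (t : ℝ) : ∑ v : Fin m → ZMod 2, t ^ wt v = (1+t)^m := by
  simp_rw [pow_wt]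
  rw [sum_pi_prod (fun i b => if b = 0 then 1 else t)]
  simp

lemma cardV {m : ℕ} : ∑ _v : Fin m → ZMod 2, (1:ℝ) = 2^m := by
  have := sumV (m := m) 1
  simpa using this

lemma card_L (hinj : ∀ u, phi g u = 0 → u = 0) :
    (Fintype.card (Lsub g) : ℝ) * 2^k = 2^m := by
  have h := charid g 1
  have hL : ∑ z : Lsub g, (1:ℝ) ^ wt (z : Fin m → ZMod 2)
      = (Fintype.card (Lsub g) : ℝ) := by simp
  have hR : ∀ u : Fin k → ZMod 2,
      ((1:ℝ)+1) ^ (m - wt (phi g u)) * ((1:ℝ)-1) ^ (wt (phi g u))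
      = if u = 0 then (2:ℝ)^m else 0 := by
    intro u
    by_cases hu : u = 0
    · subst hu
      have h0 : phi g 0 = 0 := funext fun i => by simp [phi]
      rw [h0, if_pos rfl]
      have : wt (0 : Fin m → ZMod 2) = 0 := (wt_eq_zero_iff _).mpr rfl
      rw [this]
      norm_num
    · have hne : phi g u ≠ 0 := fun h' => hu (hinj u h')
      have : wt (phi g u) ≠ 0 := fun h' => hne ((wt_eq_zero_iff _).mp h')
      rw [if_neg hu]
      simp [zero_pow this]
  rw [hL] at h
  rw [Finset.sum_congr rfl (fun u _ => hR u)] at h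
  rw [Finset.sum_ite_eq' Finset.univ (0 : Fin k → ZMod 2) (fun _ => (2:ℝ)^m)] at h
  simp only [Finset.mem_univ, if_pos] at h
  rw [mul_comm] at h
  exact h

lemma S_eval {c : ℝ} (hc1 : -1 < c) :
    (2:ℝ)^k * ∑ z : Lsub g, c ^ wt (z : Fin m → ZMod 2)
      = (1+c)^m * ∑ u : Fin k → ZMod 2, ((1-c)/(1+c)) ^ wt (phi g u) := by
  rw [charid, Finset.mul_sum]
  refine Finset.sum_congr rfl fun u _ => ?_
  have hw : wt (phi g u) ≤ m := wt_le _
  have h1c : (0:ℝ) < 1 + c := by linarith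
  rw [div_pow, pow_sub₀ _ (ne_of_gt h1c) hw]
  field_simp

lemma avg_exists (m k : ℕ) (hk : 1 ≤ k) (t : ℝ) :
    ∃ g : Fin k → Fin m → ZMod 2,
      (2:ℝ)^m * ∑ u ∈ Finset.univ.erase 0, t ^ wt (phi g u)
        ≤ ((2:ℝ)^k - 1) * (1+t)^m := by
  classical
  -- inner sum over g for fixed u ≠ 0
  have key : ∀ u : Fin k → ZMod 2, u ≠ 0 →
      ∑ g : Fin k → Fin m → ZMod 2, t ^ wt (phi g u)
        = ((2:ℝ)^m)^(k-1) * (1+t)^m := by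
    intro u hu
    obtain ⟨j0, hj0⟩ : ∃ j0, u j0 = 1 := by
      by_contra h; push_neg at h
      refine hu (funext fun j => ?_)
      have : ∀ b : ZMod 2, b ≠ 1 → b = 0 := by decide
      exact this _ (h j)
    set e : (Fin k → Fin m → ZMod 2) → (Fin k → Fin m → ZMod 2) :=
      fun g => Function.update g j0 (phi g u) with he
    have hadd : ∀ x : ZMod 2, x + x = 0 := by decide
    have hphi_e : ∀ g, phi (e g) u = g j0 := by
      intro g
      funext i
      have hs : ∀ w : Fin k → Fin m → ZMod 2,
          (∑ j, u j * w j i) = u j0 * w j0 i + ∑ j ∈ Finset.univ.erase j0, u j * w j i :=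
        fun w => (Finset.add_sum_erase _ _ (Finset.mem_univ j0)).symm
      have herase : ∀ g' : Fin k → Fin m → ZMod 2, ∀ j ∈ Finset.univ.erase j0,
          u j * (e g') j i = u j * g' j i := by
        intro g' j hj
        rw [he]
        simp only
        rw [Function.update_of_ne (Finset.mem_erase.mp hj).1]
      have h1 : phi (e g) u i
          = u j0 * phi g u i + ∑ j ∈ Finset.univ.erase j0, u j * g j i := by
        rw [phi, hs (e g), Finset.sum_congr rfl (herase g)]
        congr 1
        rw [he]; simp only [Function.update_self]
      have h2 : phi g u i = u j0 * g j0 i + ∑ j ∈ Finset.univ.erase j0, u j * g j i :=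
        hs g
      rw [h1, hj0, one_mul, h2, hj0, one_mul, add_assoc, hadd, add_zero]
    have hinv : Function.Involutive e := by
      intro g
      show Function.update (e g) j0 (phi (e g) u) = g
      rw [hphi_e g, he]
      simp only [Function.update_idem, Function.update_eq_self]
    have step1 : ∀ g : Fin k → Fin m → ZMod 2, t ^ wt (phi g u) = t ^ wt ((e g) j0) := by
      intro g; rw [he]; simp only [Function.update_self]
    have step2 : ∑ g : Fin k → Fin m → ZMod 2, t ^ wt (phi g u)
        = ∑ g : Fin k → Fin m → ZMod 2, t ^ wt (g j0) := by
      rw [Finset.sum_congr rfl fun g _ => step1 g]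
      exact Equiv.sum_comp (hinv.toPerm e) (fun g => t ^ wt (g j0))
    rw [step2]
    have step3 : ∀ g : Fin k → Fin m → ZMod 2,
        t ^ wt (g j0) = ∏ j, (if j = j0 then t ^ wt (g j) else 1) := by
      intro g
      rw [Finset.prod_ite_eq' Finset.univ j0 (fun j => t ^ wt (g j))]
      simp
    rw [Finset.sum_congr rfl fun g _ => step3 g]
    rw [← Fintype.prod_sum (fun j (v : Fin m → ZMod 2) => if j = j0 then t ^ wt v else 1)]
    have step4 : ∀ j : Fin k, (∑ v : Fin m → ZMod 2, if j = j0 then t ^ wt v else 1)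
        = if j = j0 then (1+t)^m else (2:ℝ)^m := by
      intro j
      by_cases h : j = j0
      · simp only [h, if_pos rfl]; exact sumV t
      · simp only [if_neg h]; exact cardV
    rw [Finset.prod_congr rfl fun j _ => step4 j]
    rw [← Finset.mul_prod_erase Finset.univ _ (Finset.mem_univ j0), if_pos rfl]
    have step5 : ∏ j ∈ Finset.univ.erase j0,
        (if j = j0 then (1+t)^m else (2:ℝ)^m) = ((2:ℝ)^m)^(k-1) := by
      rw [Finset.prod_congr rfl fun j hj => if_neg (Finset.mem_erase.mp hj).1]
      rw [Finset.prod_const, Finset.card_erase_of_mem (Finset.mem_univ j0),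
        Finset.card_univ, Fintype.card_fin]
    rw [step5, mul_comm]
  -- total sum over g
  have cardU : Fintype.card (Fin k → ZMod 2) = 2^k := by
    simp [Fintype.card_fun]
  have cardG : Fintype.card (Fin k → Fin m → ZMod 2) = (2^m)^k := by
    simp [Fintype.card_fun, ZMod.card, mul_comm]
  have total : ∑ g : Fin k → Fin m → ZMod 2,
      ∑ u ∈ Finset.univ.erase 0, t ^ wt (phi g u)
      = ((2:ℝ)^k - 1) * (((2:ℝ)^m)^(k-1) * (1+t)^m) := by
    rw [Finset.sum_comm]
    rw [Finset.sum_congr rfl (fun u hu => key u (Finset.mem_erase.mp hu).1)]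
    rw [Finset.sum_const, Finset.card_erase_of_mem (Finset.mem_univ _),
      Finset.card_univ, cardU, nsmul_eq_mul]
    have h1 : ((2^k - 1 : ℕ) : ℝ) = (2:ℝ)^k - 1 := by
      push_cast [Nat.one_le_two_pow]
      ring
    rw [h1]
  set c₀ : ℝ := ((2:ℝ)^k - 1) * (1+t)^m / 2^m with hc₀
  have htot2 : ∑ g : Fin k → Fin m → ZMod 2,
      ∑ u ∈ Finset.univ.erase 0, t ^ wt (phi g u)
      ≤ ∑ _g : Fin k → Fin m → ZMod 2, c₀ := by
    rw [total, Finset.sum_const, Finset.card_univ, cardG, nsmul_eq_mul, hc₀]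
    have h2 : ((2:ℝ)^m)^k = ((2:ℝ)^m)^(k-1) * 2^m := by
      rw [← pow_succ]
      congr 1
      omega
    push_cast
    rw [h2]
    have h3 : (0:ℝ) < 2^m := by positivity
    have h4 : ((2:ℝ)^m)^(k-1) * 2^m * (((2:ℝ)^k - 1) * (1+t)^m / 2^m)
        = ((2:ℝ)^k - 1) * (((2:ℝ)^m)^(k-1) * (1+t)^m) := by
      field_simp
    rw [h4]
  obtain ⟨g, -, hg⟩ := Finset.exists_le_of_sum_le Finset.univ_nonempty htot2
  refine ⟨g, ?_⟩
  have h3 : (0:ℝ) < 2^m := by positivity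
  rw [hc₀] at hg
  calc (2:ℝ)^m * ∑ u ∈ Finset.univ.erase 0, t ^ wt (phi g u)
      ≤ 2^m * (((2:ℝ)^k - 1) * (1+t)^m / 2^m) := by
        exact mul_le_mul_of_nonneg_left hg (le_of_lt h3)
    _ = ((2:ℝ)^k - 1) * (1+t)^m := by field_simp

end
end S6

open scoped RealInnerProductSpace
open S6

lemma exists_k (m : ℕ) (hm : 1 ≤ m) (B : ℝ) (hB : 2 ≤ B) :
    ∃ k : ℕ, 1 ≤ k ∧ k ≤ m ∧ (2:ℝ)^k ≤ B ∧ (k = m ∨ B < 2^(k+1)) := by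
  classical
  let P : ℕ → Prop := fun k => (2:ℝ)^k ≤ B
  have hP1 : P 1 := by simpa [P] using hB
  refine ⟨Nat.findGreatest P m, Nat.le_findGreatest hm hP1,
    Nat.findGreatest_le m, Nat.findGreatest_spec hm hP1, ?_⟩
  rcases eq_or_lt_of_le (Nat.findGreatest_le (P := P) m) with heq | hlt
  · exact Or.inl heq
  · right
    have := Nat.findGreatest_is_greatest (P := P) (n := m)
      (k := Nat.findGreatest P m + 1) (Nat.lt_succ_self _) (by omega)
    simpa [P, not_le] using this


set_option maxHeartbeats 1000000 in
theorem stmt_6 {H : Type*} [NormedAddCommGroup H] [InnerProductSpace ℝ H]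
    (m : ℕ) (hm : 1 ≤ m) (ν : ℝ) (hν1 : Real.sqrt 2 / 2 < ν) (hν2 : ν ≤ 1)
    (Φ : (Fin m → ZMod 2) → H) (Ψ : H) (hΨ : ‖Ψ‖ = 1)
    (hΦ : ∀ x y : Fin m → ZMod 2, ⟪Φ x, Φ y⟫ = (2 * ν ^ 2 - 1) ^ wt (x + y))
    (hΨΦ : ∀ x : Fin m → ZMod 2, ⟪Ψ, Φ x⟫ = ν ^ m)
    (δ : ℝ) (hδ0 : 0 < δ) (hδ1 : δ ≤ 1) (h2 : 2 ≤ 2 ^ m * ν ^ (2 * m) * δ) :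
    ∃ L : Submodule (ZMod 2) (Fin m → ZMod 2),
      (2 : ℝ) ^ Module.finrank (ZMod 2) L ≤ 4 * (ν ^ (2 * m))⁻¹ * δ⁻¹ ∧
      ⟪Ψ, ∑ x : L, Φ x⟫ ^ 2 ≥ (1 - δ) * ‖∑ x : L, Φ x‖ ^ 2 := by
  classical
  set a : ℝ := ν ^ 2 with ha_def
  have hν0 : 0 < ν := lt_trans (by positivity) hν1
  have hsq : (Real.sqrt 2 / 2) ^ 2 = 1 / 2 := by
    rw [div_pow, Real.sq_sqrt (by norm_num : (2:ℝ) ≥ 0)]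
    norm_num
  have ha : 1 / 2 < a := by
    rw [← hsq, ha_def]
    exact pow_lt_pow_left₀ hν1 (by positivity) (by norm_num)
  have ha0 : 0 < a := by positivity
  have ha1 : a ≤ 1 := by
    rw [ha_def]
    exact pow_le_one₀ (le_of_lt hν0) hν2
  set c : ℝ := 2 * ν ^ 2 - 1 with hc_def
  have hc0 : 0 < c := by rw [hc_def]; simp only [← ha_def]; linarith
  have hc1 : c ≤ 1 := by rw [hc_def]; simp only [← ha_def]; linarith
  have h1c : 1 + c = 2 * a := by rw [hc_def]; ring
  have h1c0 : (0:ℝ) < 1 + c := by linarith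
  set t : ℝ := (1 - c) / (1 + c) with ht_def
  have ht0 : 0 ≤ t := div_nonneg (by linarith) (le_of_lt h1c0)
  have h1t : 1 + t = a⁻¹ := by
    rw [ht_def]
    field_simp
    linarith [h1c]
  have hνm : ν ^ (2 * m) = a ^ m := by
    rw [ha_def, ← pow_mul, mul_comm]
  have ham0 : (0:ℝ) < a ^ m := by positivity
  have ham1 : a ^ m ≤ 1 := pow_le_one₀ (le_of_lt ha0) ha1
  rw [hνm] at h2
  -- choose k
  obtain ⟨k, hk1, hkm, hkP', hmax⟩ := exists_k m hm (2 ^ m * a ^ m * δ) h2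
  -- size bound
  have hamδ : (0:ℝ) < a ^ m * δ := mul_pos ham0 hδ0
  have hsize : (2:ℝ) ^ (m - k) ≤ 4 * (a ^ m)⁻¹ * δ⁻¹ := by
    have hinva : (1:ℝ) ≤ (a ^ m)⁻¹ := (one_le_inv₀ ham0).mpr ham1
    have hinvδ : (1:ℝ) ≤ δ⁻¹ := (one_le_inv₀ hδ0).mpr hδ1
    rcases hmax with heq | hlt2'
    · rw [heq, Nat.sub_self, pow_zero]
      nlinarith
    · have hlt2 : (2:ℝ) ^ m * a ^ m * δ < 2 ^ k * 2 := by
        rw [pow_succ] at hlt2'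
        exact hlt2'
      have hpow : (2:ℝ) ^ (m - k) * 2 ^ k = 2 ^ m := by
        rw [← pow_add]
        congr 1
        omega
      have h2k : (0:ℝ) < 2 ^ k := by positivity
      have hkey : (2:ℝ) ^ (m - k) * (a ^ m * δ) < 2 := by
        have heq2 : (2:ℝ) ^ (m - k) * (a ^ m * δ) = 2 ^ m * a ^ m * δ / 2 ^ k := by
          rw [← hpow]
          field_simp
        rw [heq2, div_lt_iff₀ h2k]
        linarith
      calc (2:ℝ) ^ (m - k) = 2 ^ (m - k) * (a ^ m * δ) / (a ^ m * δ) := by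
            field_simp
        _ ≤ 2 / (a ^ m * δ) := by
            exact (div_le_div_iff_of_pos_right hamδ).mpr (le_of_lt hkey)
        _ = 2 * (a ^ m)⁻¹ * δ⁻¹ := by
            rw [div_eq_mul_inv, mul_inv]
            ring
        _ ≤ 4 * (a ^ m)⁻¹ * δ⁻¹ := by nlinarith
  -- choose g by averaging
  obtain ⟨g, hg⟩ := avg_exists m k hk1 t
  set T : ℝ := ∑ u ∈ Finset.univ.erase 0, t ^ wt (phi g u) with hT_def
  have hT0 : 0 ≤ T := Finset.sum_nonneg fun u _ => pow_nonneg ht0 _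
  have hTδ : T < δ := by
    have h1 : ((2:ℝ) ^ k - 1) * (1 + t) ^ m < 2 ^ k * (a ^ m)⁻¹ := by
      have e : (1 + t) ^ m = (a ^ m)⁻¹ := by rw [h1t]; exact inv_pow a m
      rw [e]
      have hpos : (0:ℝ) < (a ^ m)⁻¹ := inv_pos.mpr ham0
      nlinarith
    have h2' : (2:ℝ) ^ k * (a ^ m)⁻¹ ≤ 2 ^ m * δ := by
      have h := mul_le_mul_of_nonneg_right hkP' (inv_nonneg.mpr (le_of_lt ham0))
      calc (2:ℝ) ^ k * (a ^ m)⁻¹ ≤ 2 ^ m * a ^ m * δ * (a ^ m)⁻¹ := h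
        _ = 2 ^ m * δ := by field_simp
    have h3 : (0:ℝ) < 2 ^ m := by positivity
    nlinarith [hg]
  have hinj : ∀ u, phi g u = 0 → u = 0 := by
    intro u hu
    by_contra hu0
    have hmem : u ∈ Finset.univ.erase (0 : Fin k → ZMod 2) :=
      Finset.mem_erase.mpr ⟨hu0, Finset.mem_univ u⟩
    have w0 : wt (0 : Fin m → ZMod 2) = 0 := (wt_eq_zero_iff _).mpr rfl
    have h1T : (1:ℝ) ≤ T := by
      rw [hT_def]
      calc (1:ℝ) = t ^ wt (phi g u) := by rw [hu, w0, pow_zero]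
        _ ≤ _ := Finset.single_le_sum (f := fun u' => t ^ wt (phi g u'))
            (fun u' _ => pow_nonneg ht0 _) hmem
    linarith
  refine ⟨Lsub g, ?_, ?_⟩
  · -- size
    have hcard : (Fintype.card (Lsub g) : ℝ) * 2 ^ k = 2 ^ m := card_L g hinj
    have hfr : Fintype.card (Lsub g) = 2 ^ Module.finrank (ZMod 2) (Lsub g) := by
      rw [Module.card_eq_pow_finrank (K := ZMod 2), ZMod.card]
    have hpow : (2:ℝ) ^ (m - k) * 2 ^ k = 2 ^ m := by
      rw [← pow_add]; congr 1; omega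
    have h2k : (0:ℝ) < 2 ^ k := by positivity
    have hPval : (Fintype.card (Lsub g) : ℝ) = 2 ^ (m - k) := by
      have := hcard.trans hpow.symm
      exact mul_right_cancel₀ (ne_of_gt h2k) this
    have : (2:ℝ) ^ Module.finrank (ZMod 2) (Lsub g) = 2 ^ (m - k) := by
      rw [← hPval, hfr]
      push_cast
      ring
    rw [this, hνm]
    exact hsize
  · -- fidelity
    have hcard : (Fintype.card (Lsub g) : ℝ) * 2 ^ k = 2 ^ m := card_L g hinj
    have hne : Nonempty (Lsub g) := ⟨0⟩
    set P : ℝ := (Fintype.card (Lsub g) : ℝ) with hP_def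
    have hP0 : 0 < P := by
      rw [hP_def]
      exact_mod_cast Fintype.card_pos (α := Lsub g)
    have hiw : ⟪Ψ, ∑ x : Lsub g, Φ x⟫ = P * ν ^ m := by
      rw [inner_sum]
      rw [Finset.sum_congr rfl fun (x : Lsub g) _ => hΨΦ (x : Fin m → ZMod 2)]
      rw [Finset.sum_const, Finset.card_univ, nsmul_eq_mul, hP_def]
    set S : ℝ := ∑ z : Lsub g, c ^ wt (z : Fin m → ZMod 2) with hS_def
    have hnw : ‖∑ x : Lsub g, Φ x‖ ^ 2 = P * S := by
      rw [← real_inner_self_eq_norm_sq, sum_inner]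
      have hx : ∀ x : Lsub g, ⟪Φ (x : Fin m → ZMod 2), ∑ y : Lsub g, Φ y⟫ = S := by
        intro x
        rw [inner_sum]
        rw [Finset.sum_congr rfl fun (y : Lsub g) _ =>
          hΦ (x : Fin m → ZMod 2) (y : Fin m → ZMod 2)]
        rw [hS_def]
        rw [← Equiv.sum_comp (Equiv.addLeft x)
          (fun z : Lsub g => (2 * ν ^ 2 - 1) ^ wt (z : Fin m → ZMod 2))]
        refine Finset.sum_congr rfl fun y _ => ?_
        congr 2
      rw [Finset.sum_congr rfl fun x _ => hx x, Finset.sum_const, Finset.card_univ,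
        nsmul_eq_mul, ← hP_def]
    have w0 : wt (0 : Fin m → ZMod 2) = 0 := (wt_eq_zero_iff _).mpr rfl
    have hsplit : ∑ u : Fin k → ZMod 2, t ^ wt (phi g u) = 1 + T := by
      rw [← Finset.add_sum_erase _ _ (Finset.mem_univ (0 : Fin k → ZMod 2)), ← hT_def]
      congr 1
      have h0 : phi g 0 = 0 := funext fun i => by simp [phi]
      rw [h0, w0, pow_zero]
    have hSeval := S_eval g (show (-1:ℝ) < c by linarith)
    rw [← hS_def, ← ht_def, hsplit] at hSeval
    have hS2 : S = P * a ^ m * (1 + T) := by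
      have h2k : (0:ℝ) < 2 ^ k := by positivity
      have hcm : ((1:ℝ)+c)^m = 2 ^ m * a ^ m := by rw [h1c, mul_pow]
      apply mul_left_cancel₀ (ne_of_gt h2k)
      rw [hSeval, hcm, ← hcard]
      ring
    rw [hiw, hnw, hS2]
    have hνma : (ν ^ m) ^ 2 = a ^ m := by
      rw [ha_def, ← pow_mul, ← pow_mul, mul_comm]
    have hL : (P * ν ^ m) ^ 2 = P ^ 2 * a ^ m := by rw [mul_pow, hνma]
    rw [hL]
    have key : (1 - δ) * (1 + T) ≤ 1 := by
      have h1 : (1 - δ) * (1 + T) ≤ (1 - δ) * (1 + δ) :=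
        mul_le_mul_of_nonneg_left (by linarith) (by linarith)
      have h2 : (1 - δ) * (1 + δ) = 1 - δ ^ 2 := by ring
      have h3 : 0 ≤ δ ^ 2 := sq_nonneg δ
      linarith
    rw [ge_iff_le]
    have hX : (0:ℝ) ≤ P ^ 2 * a ^ m := by positivity
    calc (1 - δ) * (P * (P * a ^ m * (1 + T)))
        = ((1 - δ) * (1 + T)) * (P ^ 2 * a ^ m) := by ring
      _ ≤ 1 * (P ^ 2 * a ^ m) := mul_le_mul_of_nonneg_right key hX
      _ = P ^ 2 * a ^ m := one_mul _
end

section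
/- Let 0 < p < 1 and set N := 2p² − 2p + 1, M := (3p² − 2p + 1)/(4N), ν := √(N/(3p² − 2p + 1)). In the real inner product space of functions (Fin 4 → Fin 2) → ℝ with the standard dot product, let e_s denote the standard basis vector at the string s, and define, for each sign ε ∈ {+1, −1}: φ_ε := ((1−p)/√N)·e_{0000} + (ε·p/√(2N))·(e_{0011} + e_{1100}); φ_ε⁰ := ((1−p)/(2√(N·M)))·e_{0000} + (ε·p/√(2·N·M))·e_{0011}; φ_ε¹ := ((1−p)/(2√(N·M)))·e_{0000} + (ε·p/√(2·N·M))·e_{1100}. Then for each ε: (i) φ_ε = √M · (φ_ε⁰ + φ_ε¹); (ii) ‖φ_ε‖ = ‖φ_ε⁰‖ = ‖φ_ε¹‖ = 1; (iii) ⟪φ_ε⁰, φ_ε¹⟫ = 2ν² − 1; and (iv) ⟪φ_ε, φ_ε⁰⟫ = ⟪φ_ε, φ_ε¹⟫ = ν. Moreover √M = 1/(2ν). -/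
set_option maxHeartbeats 2000000


open scoped RealInnerProductSpace

theorem stmt_12 (p : ℝ) (hp0 : 0 < p) (hp1 : p < 1) (ε : ℝ) (hε : ε = 1 ∨ ε = -1) :
    let N : ℝ := 2*p^2 - 2*p + 1
    let M : ℝ := (3*p^2 - 2*p + 1) / (4*N)
    let ν : ℝ := Real.sqrt (N / (3*p^2 - 2*p + 1))
    let e : (Fin 4 → Fin 2) → EuclideanSpace ℝ (Fin 4 → Fin 2) :=
      fun s => EuclideanSpace.single s 1
    let φ : EuclideanSpace ℝ (Fin 4 → Fin 2) :=
      ((1 - p) / Real.sqrt N) • e ![0,0,0,0]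
        + (ε * p / Real.sqrt (2*N)) • (e ![0,0,1,1] + e ![1,1,0,0])
    let φ0 : EuclideanSpace ℝ (Fin 4 → Fin 2) :=
      ((1 - p) / (2 * Real.sqrt (N*M))) • e ![0,0,0,0]
        + (ε * p / Real.sqrt (2*N*M)) • e ![0,0,1,1]
    let φ1 : EuclideanSpace ℝ (Fin 4 → Fin 2) :=
      ((1 - p) / (2 * Real.sqrt (N*M))) • e ![0,0,0,0]
        + (ε * p / Real.sqrt (2*N*M)) • e ![1,1,0,0]
    φ = Real.sqrt M • (φ0 + φ1)
    ∧ ‖φ‖ = 1 ∧ ‖φ0‖ = 1 ∧ ‖φ1‖ = 1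
    ∧ ⟪φ0, φ1⟫ = 2 * ν^2 - 1
    ∧ ⟪φ, φ0⟫ = ν ∧ ⟪φ, φ1⟫ = ν
    ∧ Real.sqrt M = 1 / (2 * ν) := by
  intro N M ν e φ φ0 φ1
  have hN : (0:ℝ) < N := by simp only [N]; nlinarith
  have hD : (0:ℝ) < 3*p^2 - 2*p + 1 := by nlinarith
  have hM : (0:ℝ) < M := div_pos hD (by linarith)
  have h01 : (![0,0,0,0] : Fin 4 → Fin 2) ≠ ![0,0,1,1] := by decide
  have h02 : (![0,0,0,0] : Fin 4 → Fin 2) ≠ ![1,1,0,0] := by decide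
  have h12 : (![0,0,1,1] : Fin 4 → Fin 2) ≠ ![1,1,0,0] := by decide
  have hεε : ε * ε = 1 := by rcases hε with h | h <;> rw [h] <;> norm_num
  have hsN := Real.mul_self_sqrt hN.le
  have hsM := Real.mul_self_sqrt hM.le
  have hs2N := Real.mul_self_sqrt (by linarith : (0:ℝ) ≤ 2*N)
  have hsNM : Real.sqrt (N*M) = Real.sqrt N * Real.sqrt M := Real.sqrt_mul hN.le M
  have hs2NM : Real.sqrt (2*N*M) = Real.sqrt (2*N) * Real.sqrt M :=
    Real.sqrt_mul (by linarith) M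
  have hNne : Real.sqrt N ≠ 0 := by positivity
  have hMne : Real.sqrt M ≠ 0 := by positivity
  have h2Nne : Real.sqrt (2*N) ≠ 0 := by positivity
  have h4NM : 4 * (N * M) = 3*p^2 - 2*p + 1 := by
    simp only [M]; field_simp
  have hν : ν = 1 / (2 * Real.sqrt M) := by
    simp only [ν]
    rw [show N / (3*p^2 - 2*p + 1) = 1 / (4 * M) by
      rw [← h4NM]; field_simp]
    rw [one_div, Real.sqrt_inv, show (4:ℝ)*M = 2^2*M by ring, Real.sqrt_mul (by positivity),
      Real.sqrt_sq (by norm_num), one_div]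
  have hNdef : N = 2*p^2 - 2*p + 1 := rfl
  have h2 : Real.sqrt 2 * Real.sqrt 2 = 2 := Real.mul_self_sqrt (by norm_num)
  have P0 : (Real.sqrt 2 * Real.sqrt N) * (Real.sqrt 2 * Real.sqrt N) = 2*N := by
    rw [show (Real.sqrt 2 * Real.sqrt N) * (Real.sqrt 2 * Real.sqrt N)
        = (Real.sqrt 2 * Real.sqrt 2) * (Real.sqrt N * Real.sqrt N) by ring, h2, hsN]
  have P1 : (Real.sqrt 2 * Real.sqrt N * Real.sqrt M) * (Real.sqrt 2 * Real.sqrt N * Real.sqrt M) = 2*(N*M) := by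
    rw [show (Real.sqrt 2 * Real.sqrt N * Real.sqrt M) * (Real.sqrt 2 * Real.sqrt N * Real.sqrt M)
        = (Real.sqrt 2 * Real.sqrt 2) * ((Real.sqrt N * Real.sqrt N) * (Real.sqrt M * Real.sqrt M)) by ring, h2, hsN, hsM]
  have P2 : (Real.sqrt N * Real.sqrt M) * (Real.sqrt N * Real.sqrt M) = N*M := by
    rw [show (Real.sqrt N * Real.sqrt M) * (Real.sqrt N * Real.sqrt M)
        = (Real.sqrt N * Real.sqrt N) * (Real.sqrt M * Real.sqrt M) by ring, hsN, hsM]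
  have hν2 : ν^2 = N / (3*p^2 - 2*p + 1) := Real.sq_sqrt (le_of_lt (div_pos hN hD))
  have hs2 : Real.sqrt (2*N) = Real.sqrt 2 * Real.sqrt N := Real.sqrt_mul (by norm_num) N
  have hε2 : ε^2 = 1 := by rw [sq]; exact hεε
  have hNp : (2*p^2 - 2*p + 1 : ℝ) ≠ 0 := hN.ne'
  have hDp : (3*p^2 - 2*p + 1 : ℝ) ≠ 0 := hD.ne'
  have hN0 : N ≠ 0 := hN.ne'
  have hNp' : (1 - p*2 + p^2*2 : ℝ) ≠ 0 := by intro h; apply hNp; linear_combination h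
  have hDp' : (1 - p*2 + p^2*3 : ℝ) ≠ 0 := by intro h; apply hDp; linear_combination h
  have hN2 : Real.sqrt N ^ 2 = N := Real.sq_sqrt hN.le
  have hM2 : Real.sqrt M ^ 2 = M := Real.sq_sqrt hM.le
  have h22 : Real.sqrt 2 ^ 2 = 2 := Real.sq_sqrt (by norm_num)
  have hN4 : Real.sqrt N ^ 4 = N^2 := by rw [show Real.sqrt N ^ 4 = (Real.sqrt N ^ 2)^2 by ring, hN2]
  have hM4 : Real.sqrt M ^ 4 = M^2 := by rw [show Real.sqrt M ^ 4 = (Real.sqrt M ^ 2)^2 by ring, hM2]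
  have hN3 : Real.sqrt N ^ 3 = N * Real.sqrt N := by rw [show Real.sqrt N ^ 3 = Real.sqrt N ^ 2 * Real.sqrt N by ring, hN2]
  have hM3 : Real.sqrt M ^ 3 = M * Real.sqrt M := by rw [show Real.sqrt M ^ 3 = Real.sqrt M ^ 2 * Real.sqrt M by ring, hM2]
  -- part 1
  have part1 : φ = Real.sqrt M • (φ0 + φ1) := by
    have hc : Real.sqrt M • ((1-p)/(2*Real.sqrt (N*M))) = ((1-p)/Real.sqrt N)/2 := by
      rw [smul_eq_mul, hsNM]; field_simp
    have hd : Real.sqrt M • (ε*p/Real.sqrt (2*N*M)) = ε*p/Real.sqrt (2*N) := by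
      rw [smul_eq_mul, hs2NM]; field_simp
    have hc' : Real.sqrt M * ((1-p)/(2*Real.sqrt (N*M))) = ((1-p)/Real.sqrt N)/2 := by
      rw [hsNM]; field_simp
    have hd' : Real.sqrt M * (ε*p/Real.sqrt (2*N*M)) = ε*p/Real.sqrt (2*N) := by
      rw [hs2NM]; field_simp
    simp only [φ, φ0, φ1, smul_add, smul_smul, hc', hd']
    module
  refine ⟨part1, ?_, ?_, ?_, ?_, ?_, ?_, by rw [hν]; field_simp⟩
  · rw [@norm_eq_sqrt_real_inner]
    simp only [φ, e, inner_add_left, inner_add_right, real_inner_smul_left,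
      real_inner_smul_right, EuclideanSpace.inner_single_left, EuclideanSpace.single_apply,
      map_one, if_neg h01, if_neg h02, if_neg h12, if_neg (Ne.symm h01),
      if_neg (Ne.symm h02), if_neg (Ne.symm h12), if_pos rfl, if_true, mul_one, mul_zero, add_zero,
      zero_add]
    rw [Real.sqrt_eq_one]
    simp only [hsNM, hs2NM, hs2]
    field_simp
    ring_nf
    simp only [hN2, hM2, h22, hN4, hM4, hN3, hM3, hε2]
    simp only [M, N]
    field_simp
    ring
  · rw [@norm_eq_sqrt_real_inner]
    simp only [φ, φ0, φ1, e, inner_add_left, inner_add_right, real_inner_smul_left,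
      real_inner_smul_right, EuclideanSpace.inner_single_left, EuclideanSpace.single_apply,
      map_one, if_neg h01, if_neg h02, if_neg h12, if_neg (Ne.symm h01),
      if_neg (Ne.symm h02), if_neg (Ne.symm h12), if_pos rfl, if_true, mul_one, mul_zero, add_zero,
      zero_add]
    rw [Real.sqrt_eq_one]
    simp only [hsNM, hs2NM, hs2]
    field_simp
    ring_nf
    simp only [hN2, hM2, h22, hN4, hM4, hN3, hM3, hε2]
    simp only [M]
    field_simp
    ring
  · rw [@norm_eq_sqrt_real_inner]
    simp only [φ, φ0, φ1, e, inner_add_left, inner_add_right, real_inner_smul_left,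
      real_inner_smul_right, EuclideanSpace.inner_single_left, EuclideanSpace.single_apply,
      map_one, if_neg h01, if_neg h02, if_neg h12, if_neg (Ne.symm h01),
      if_neg (Ne.symm h02), if_neg (Ne.symm h12), if_pos rfl, if_true, mul_one, mul_zero, add_zero,
      zero_add]
    rw [Real.sqrt_eq_one]
    simp only [hsNM, hs2NM, hs2]
    field_simp
    ring_nf
    simp only [hN2, hM2, h22, hN4, hM4, hN3, hM3, hε2]
    simp only [M]
    field_simp
    ring
  · simp only [φ, φ0, φ1, e, inner_add_left, inner_add_right, real_inner_smul_left,
      real_inner_smul_right, EuclideanSpace.inner_single_left, EuclideanSpace.single_apply,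
      map_one, if_neg h01, if_neg h02, if_neg h12, if_neg (Ne.symm h01),
      if_neg (Ne.symm h02), if_neg (Ne.symm h12), if_pos rfl, if_true, mul_one, mul_zero, add_zero,
      zero_add]
    rw [hν2]
    simp only [hsNM, hs2NM, hs2]
    field_simp
    ring_nf
    simp only [hN2, hM2, h22, hN4, hM4, hN3, hM3, hε2]
    simp only [M]
    field_simp
    simp only [N]
    ring
  · simp only [φ, φ0, φ1, e, inner_add_left, inner_add_right, real_inner_smul_left,
      real_inner_smul_right, EuclideanSpace.inner_single_left, EuclideanSpace.single_apply,
      map_one, if_neg h01, if_neg h02, if_neg h12, if_neg (Ne.symm h01),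
      if_neg (Ne.symm h02), if_neg (Ne.symm h12), if_pos rfl, if_true, mul_one, mul_zero, add_zero,
      zero_add]
    rw [hν]
    simp only [hsNM, hs2NM, hs2]
    field_simp
    ring_nf
    simp only [hN2, hM2, h22, hN4, hM4, hN3, hM3, hε2]
    simp only [M, N]
    field_simp
    ring
  · simp only [φ, φ0, φ1, e, inner_add_left, inner_add_right, real_inner_smul_left,
      real_inner_smul_right, EuclideanSpace.inner_single_left, EuclideanSpace.single_apply,
      map_one, if_neg h01, if_neg h02, if_neg h12, if_neg (Ne.symm h01),
      if_neg (Ne.symm h02), if_neg (Ne.symm h12), if_pos rfl, if_true, mul_one, mul_zero, add_zero,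
      zero_add]
    rw [hν]
    simp only [hsNM, hs2NM, hs2]
    field_simp
    ring_nf
    simp only [hN2, hM2, h22, hN4, hM4, hN3, hM3, hε2]
    simp only [M, N]
    field_simp
    ring
end

section
/- Let 0 ≤ p ≤ 1 and set η := 1 − 2p, C₊ := (√(1 + η⁴) + √(1 − η⁴))/2, C₋ := (√(1 + η⁴) − √(1 − η⁴))/2, D := η²/√2, E := 1 + η⁴, and ν := 1/√E. In the real inner product space of functions (Fin 4 → Fin 2) → ℝ with the standard dot product, let e_s denote the standard basis vector at the string s, and define ω₊ := C₊·e_{0011} + C₋·e_{1100}, ω₋ := C₋·e_{0011} + C₊·e_{1100}, and for j ∈ {0,1}: ω₊ʲ := (1/√E)·(C₊·e_{0011} + C₋·e_{1100} + (−1)ʲ·D·e_{0000} + (−1)ʲ·D·e_{1111}), and ω₋ʲ defined the same way with C₊ and C₋ interchanged. Then for each sign ε ∈ {+, −}: (i) ‖ω_ε‖ = ‖ω_ε⁰‖ = ‖ω_ε¹‖ = 1; (ii) ω_ε = (1/(2ν))·(ω_ε⁰ + ω_ε¹); (iii) ⟪ω_ε⁰, ω_ε¹⟫ = 2ν² − 1;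 and (iv) ⟪ω_ε, ω_ε⁰⟫ = ⟪ω_ε, ω_ε¹⟫ = ν. -/
open scoped RealInnerProductSpace

set_option maxHeartbeats 1000000 in
theorem stmt_13 (p : ℝ) (hp0 : 0 ≤ p) (hp1 : p ≤ 1) (ε : Bool) :
    let η : ℝ := 1 - 2*p
    let Cp : ℝ := (Real.sqrt (1 + η^4) + Real.sqrt (1 - η^4)) / 2
    let Cm : ℝ := (Real.sqrt (1 + η^4) - Real.sqrt (1 - η^4)) / 2
    let D : ℝ := η^2 / Real.sqrt 2
    let E : ℝ := 1 + η^4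
    let ν : ℝ := 1 / Real.sqrt E
    let e : (Fin 4 → Fin 2) → EuclideanSpace ℝ (Fin 4 → Fin 2) :=
      fun s => EuclideanSpace.single s 1
    -- `C₁` is the coefficient of `e_{0011}` and `C₂` that of `e_{1100}`;
    -- for the sign `ε = +` these are `C₊, C₋`, and for `ε = −` they are interchanged.
    let C₁ : ℝ := if ε then Cp else Cm
    let C₂ : ℝ := if ε then Cm else Cp
    let ω : EuclideanSpace ℝ (Fin 4 → Fin 2) := C₁ • e ![0,0,1,1] + C₂ • e ![1,1,0,0]
    let ω0 : EuclideanSpace ℝ (Fin 4 → Fin 2) :=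
      (1 / Real.sqrt E) • (C₁ • e ![0,0,1,1] + C₂ • e ![1,1,0,0]
        + D • e ![0,0,0,0] + D • e ![1,1,1,1])
    let ω1 : EuclideanSpace ℝ (Fin 4 → Fin 2) :=
      (1 / Real.sqrt E) • (C₁ • e ![0,0,1,1] + C₂ • e ![1,1,0,0]
        - D • e ![0,0,0,0] - D • e ![1,1,1,1])
    ‖ω‖ = 1 ∧ ‖ω0‖ = 1 ∧ ‖ω1‖ = 1
    ∧ ω = (1 / (2 * ν)) • (ω0 + ω1)
    ∧ ⟪ω0, ω1⟫ = 2 * ν^2 - 1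
    ∧ ⟪ω, ω0⟫ = ν ∧ ⟪ω, ω1⟫ = ν := by
  intro η Cp Cm D E ν e C₁ C₂ ω ω0 ω1
  have hη1 : -1 ≤ η := by simp only [η]; linarith
  have hη2 : η ≤ 1 := by simp only [η]; linarith
  have hsq : η^2 ≤ 1 := by nlinarith
  have hη4 : η^4 ≤ 1 := by nlinarith [sq_nonneg η]
  have hη4' : (0:ℝ) ≤ η^4 := by positivity
  have ha2 : (Real.sqrt (1 + η^4))^2 = 1 + η^4 := Real.sq_sqrt (by linarith)
  have hb2 : (Real.sqrt (1 - η^4))^2 = 1 - η^4 := Real.sq_sqrt (by linarith)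
  have hspos : 0 < Real.sqrt E := Real.sqrt_pos.2 (by simp only [E]; linarith)
  have hss : Real.sqrt E * Real.sqrt E = 1 + η^4 :=
    Real.mul_self_sqrt (by simp only [E]; linarith)
  have hDD : D * D = η^4 / 2 := by
    have h2 : Real.sqrt 2 * Real.sqrt 2 = 2 := Real.mul_self_sqrt (by norm_num)
    simp only [D, div_mul_div_comm, h2]
    ring
  have hCsq : C₁^2 + C₂^2 = 1 := by
    cases ε <;>
      simp only [C₁, C₂, Cp, Cm, if_true, if_false, Bool.false_eq_true] <;>
      linear_combination ha2/2 + hb2/2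
  have hCprod : C₁ * C₂ = η^4 / 2 := by
    cases ε <;>
      simp only [C₁, C₂, Cp, Cm, if_true, if_false, Bool.false_eq_true] <;>
      linear_combination ha2/4 - hb2/4
  have h1 : (![0,0,1,1] : Fin 4 → Fin 2) ≠ ![1,1,0,0] := by decide
  have h2 : (![0,0,1,1] : Fin 4 → Fin 2) ≠ ![0,0,0,0] := by decide
  have h3 : (![0,0,1,1] : Fin 4 → Fin 2) ≠ ![1,1,1,1] := by decide
  have h4 : (![1,1,0,0] : Fin 4 → Fin 2) ≠ ![0,0,0,0] := by decide
  have h5 : (![1,1,0,0] : Fin 4 → Fin 2) ≠ ![1,1,1,1] := by decide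
  have h6 : (![0,0,0,0] : Fin 4 → Fin 2) ≠ ![1,1,1,1] := by decide
  have simp_inner : ∀ s t : Fin 4 → Fin 2,
      ⟪e s, e t⟫ = if t = s then (1:ℝ) else 0 := by
    intro s t
    simp only [e]
    rw [EuclideanSpace.inner_single_left, EuclideanSpace.single_apply]
    simp [eq_comm]
  have hE : E = 1 + η^4 := rfl
  have hω0ω1 : ⟪ω0, ω1⟫ = 2 * ν^2 - 1 := by
    simp only [ω0, ω1, ν, inner_add_left, inner_add_right, inner_sub_left, inner_sub_right,
      real_inner_smul_left, real_inner_smul_right, simp_inner, eq_self_iff_true, if_true,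
      if_neg h1, if_neg h1.symm, if_neg h2, if_neg h2.symm, if_neg h3, if_neg h3.symm,
      if_neg h4, if_neg h4.symm, if_neg h5, if_neg h5.symm, if_neg h6, if_neg h6.symm]
    field_simp
    linear_combination hCsq - 2*hDD + hE + hss
  have hωω : ⟪ω, ω⟫ = 1 := by
    simp only [ω, inner_add_left, inner_add_right,
      real_inner_smul_left, real_inner_smul_right, simp_inner, eq_self_iff_true, if_true,
      if_neg h1, if_neg h1.symm]
    linear_combination hCsq
  have hω0ω0 : ⟪ω0, ω0⟫ = 1 := by
    simp only [ω0, inner_add_left, inner_add_right,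
      real_inner_smul_left, real_inner_smul_right, simp_inner, eq_self_iff_true, if_true,
      if_neg h1, if_neg h1.symm, if_neg h2, if_neg h2.symm, if_neg h3, if_neg h3.symm,
      if_neg h4, if_neg h4.symm, if_neg h5, if_neg h5.symm, if_neg h6, if_neg h6.symm]
    field_simp
    linear_combination hCsq + 2*hDD - hE - hss
  have hω1ω1 : ⟪ω1, ω1⟫ = 1 := by
    simp only [ω1, inner_add_left, inner_add_right, inner_sub_left, inner_sub_right,
      real_inner_smul_left, real_inner_smul_right, simp_inner, eq_self_iff_true, if_true,
      if_neg h1, if_neg h1.symm, if_neg h2, if_neg h2.symm, if_neg h3, if_neg h3.symm,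
      if_neg h4, if_neg h4.symm, if_neg h5, if_neg h5.symm, if_neg h6, if_neg h6.symm]
    field_simp
    linear_combination hCsq + 2*hDD - hE - hss
  have hωω0 : ⟪ω, ω0⟫ = ν := by
    simp only [ω, ω0, ν, inner_add_left, inner_add_right,
      real_inner_smul_left, real_inner_smul_right, simp_inner, eq_self_iff_true, if_true,
      if_neg h1, if_neg h1.symm, if_neg h2, if_neg h2.symm, if_neg h3, if_neg h3.symm,
      if_neg h4, if_neg h4.symm, if_neg h5, if_neg h5.symm, if_neg h6, if_neg h6.symm]
    field_simp
    linear_combination hCsq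
  have hωω1 : ⟪ω, ω1⟫ = ν := by
    simp only [ω, ω1, ν, inner_add_left, inner_add_right, inner_sub_left, inner_sub_right,
      real_inner_smul_left, real_inner_smul_right, simp_inner, eq_self_iff_true, if_true,
      if_neg h1, if_neg h1.symm, if_neg h2, if_neg h2.symm, if_neg h3, if_neg h3.symm,
      if_neg h4, if_neg h4.symm, if_neg h5, if_neg h5.symm, if_neg h6, if_neg h6.symm]
    field_simp
    linear_combination hCsq
  have normone : ∀ x : EuclideanSpace ℝ (Fin 4 → Fin 2), ⟪x, x⟫ = 1 → ‖x‖ = 1 := by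
    intro x hx
    have h := real_inner_self_eq_norm_sq x
    nlinarith [norm_nonneg x]
  have hdecomp : ω = (1 / (2 * ν)) • (ω0 + ω1) := by
    have hν : (1 : ℝ) / (2 * ν) = Real.sqrt E / 2 := by
      simp only [ν]
      field_simp
    rw [hν]
    show ω = (Real.sqrt E / 2) • (ω0 + ω1)
    simp only [ω, ω0, ω1]
    rw [← smul_add]
    have hsum : (C₁ • e ![0,0,1,1] + C₂ • e ![1,1,0,0] + D • e ![0,0,0,0] + D • e ![1,1,1,1])
        + (C₁ • e ![0,0,1,1] + C₂ • e ![1,1,0,0] - D • e ![0,0,0,0] - D • e ![1,1,1,1])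
        = (2:ℝ) • (C₁ • e ![0,0,1,1] + C₂ • e ![1,1,0,0]) := by
      module
    rw [hsum, smul_smul, smul_smul]
    rw [show Real.sqrt E / 2 * (1 / Real.sqrt E) * 2 = 1 by field_simp, one_smul]
  exact ⟨normone ω hωω, normone ω0 hω0ω0, normone ω1 hω1ω1, hdecomp, hω0ω1, hωω0, hωω1⟩
end

section
/- Work in Matrix (Fin 4) (Fin 4) ℂ, with the basis indexed by two-mode occupation numbers in the order |00⟩, |01⟩, |10⟩, |11⟩ (indices 0,1,2,3). Let A be the matrix with A 0 3 = A 3 0 = −1 and all other entries 0, and let N₁ be the diagonal matrix diag(0, 0, 1, 1). Then: (i) for every real θ, Matrix.exp(Complex.I·θ • A) applied to the standard basis vector e₀ equals cos θ • e₀ − (Complex.I · sin θ) • e₃; and (ii) for all complex numbers α, β with |α|² + |β|² = 1 there exist real numbers γ, φ, θ such that Complex.exp(Complex.I·γ) • ((Matrix.exp(Complex.I·φ • N₁) * Matrix.exp(Complex.I·θ • A)) applied to e₀) = α • e₀ + β • e₃. Hence every two-mode even state α|00⟩ + β|11⟩ is, up to a global phase, obtained from |00⟩ by the unitaries exp(iφ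 a₁†a₁) and exp(iθ(a₁a₂ + a₂†a₁†)). -/
open Matrix

/-- The matrix of the quadratic fermionic operator `a₁a₂ + a₂†a₁†` in the two-mode
occupation basis `|00⟩, |01⟩, |10⟩, |11⟩` (with `a₂†a₁†|00⟩ = −|11⟩`). -/
noncomputable def Aop : Matrix (Fin 4) (Fin 4) ℂ :=
  !![0, 0, 0, -1;
     0, 0, 0, 0;
     0, 0, 0, 0;
     -1, 0, 0, 0]

/-- The matrix of the number operator `a₁†a₁` of the first mode. -/
noncomputable def N1op : Matrix (Fin 4) (Fin 4) ℂ :=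
  !![0, 0, 0, 0;
     0, 0, 0, 0;
     0, 0, 1, 0;
     0, 0, 0, 1]

/-- The basis vector `|00⟩`. -/
noncomputable def e0 : Fin 4 → ℂ := Pi.single 0 1

/-- The basis vector `|11⟩`. -/
noncomputable def e3 : Fin 4 → ℂ := Pi.single 3 1

noncomputable def Smat : Matrix (Fin 4) (Fin 4) ℂ :=
  !![1,0,0,1; 0,1,0,0; 0,0,1,0; 1,0,0,-1]

noncomputable def Tmat : Matrix (Fin 4) (Fin 4) ℂ :=
  !![1/2,0,0,1/2; 0,1,0,0; 0,0,1,0; 1/2,0,0,-1/2]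

lemma diag4 (a b c d : ℂ) : Matrix.diagonal ![a,b,c,d]
    = !![a,0,0,0; 0,b,0,0; 0,0,c,0; 0,0,0,d] := by
  ext i j
  fin_cases i <;> fin_cases j <;>
    simp [Matrix.diagonal_apply, Matrix.vecHead, Matrix.vecTail, Fin.ext_iff] <;> omega

lemma S_mul_T : Smat * Tmat = 1 := by
  ext i j
  fin_cases i <;> fin_cases j <;>
    simp [Smat, Tmat, Matrix.mul_apply, Fin.sum_univ_four, Matrix.one_apply,
      Matrix.vecHead, Matrix.vecTail] <;> norm_num

lemma S_inv : Smat⁻¹ = Tmat := Matrix.inv_eq_right_inv S_mul_T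

lemma S_unit : IsUnit Smat := by
  rw [Matrix.isUnit_iff_isUnit_det]
  exact IsUnit.of_mul_eq_one Tmat.det (by rw [← Matrix.det_mul, S_mul_T, Matrix.det_one])

lemma conjA (θ : ℝ) :
    (Complex.I * (θ:ℂ)) • Aop
      = Smat * Matrix.diagonal ![-(Complex.I*(θ:ℂ)), 0, 0, Complex.I*(θ:ℂ)] * Smat⁻¹ := by
  rw [S_inv, diag4]
  ext i j
  fin_cases i <;> fin_cases j <;>
    simp [Aop, Smat, Tmat, Matrix.mul_apply, Fin.sum_univ_four,
      Matrix.vecHead, Matrix.vecTail] <;> ring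

lemma exp_diag4 (a b c d : ℂ) :
    NormedSpace.exp (Matrix.diagonal ![a,b,c,d])
      = !![Complex.exp a,0,0,0; 0,Complex.exp b,0,0;
           0,0,Complex.exp c,0; 0,0,0,Complex.exp d] := by
  rw [Matrix.exp_diagonal, Pi.exp_def]
  have hfun : (fun i => NormedSpace.exp (![a,b,c,d] i))
      = ![Complex.exp a, Complex.exp b, Complex.exp c, Complex.exp d] := by
    funext i
    fin_cases i <;> simp [← Complex.exp_eq_exp_ℂ, Matrix.vecHead, Matrix.vecTail]
  rw [hfun, diag4]

lemma expA (θ : ℝ) :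
    NormedSpace.exp ((Complex.I * (θ:ℂ)) • Aop)
      = !![(Real.cos θ : ℂ), 0, 0, -(Complex.I * (Real.sin θ : ℂ));
           0, 1, 0, 0;
           0, 0, 1, 0;
           -(Complex.I * (Real.sin θ : ℂ)), 0, 0, (Real.cos θ : ℂ)] := by
  have hc : Complex.exp (Complex.I*(θ:ℂ)) = (Real.cos θ : ℂ) + (Real.sin θ : ℂ) * Complex.I := by
    rw [mul_comm, Complex.exp_mul_I]; simp
  have hc' : Complex.exp (-(Complex.I*(θ:ℂ)))
      = (Real.cos θ : ℂ) - (Real.sin θ : ℂ) * Complex.I := by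
    rw [show -(Complex.I*(θ:ℂ)) = ((-θ : ℝ) : ℂ) * Complex.I by push_cast; ring,
      Complex.exp_mul_I]
    push_cast
    simp [sub_eq_add_neg]
  rw [conjA, Matrix.exp_conj Smat _ S_unit, exp_diag4, S_inv, hc, hc']
  ext i j
  fin_cases i <;> fin_cases j <;>
    simp [Smat, Tmat, Matrix.mul_apply, Fin.sum_univ_four,
      Matrix.vecHead, Matrix.vecTail] <;> ring

lemma expN (φ : ℝ) :
    NormedSpace.exp ((Complex.I * (φ:ℂ)) • N1op)
      = !![1,0,0,0; 0,1,0,0; 0,0,Complex.exp (Complex.I*(φ:ℂ)),0;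
           0,0,0,Complex.exp (Complex.I*(φ:ℂ))] := by
  have h : (Complex.I * (φ:ℂ)) • N1op
      = Matrix.diagonal ![0, 0, Complex.I*(φ:ℂ), Complex.I*(φ:ℂ)] := by
    rw [diag4]
    ext i j
    fin_cases i <;> fin_cases j <;>
      simp [N1op, Matrix.vecHead, Matrix.vecTail]
  rw [h, exp_diag4, Complex.exp_zero]

theorem stmt_14 :
    (∀ θ : ℝ,
      (NormedSpace.exp ((Complex.I * (θ : ℂ)) • Aop)).mulVec e0
        = ((Real.cos θ : ℂ)) • e0 - (Complex.I * (Real.sin θ : ℂ)) • e3)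
    ∧ (∀ α β : ℂ, ‖α‖ ^ 2 + ‖β‖ ^ 2 = 1 →
        ∃ γ φ θ : ℝ,
          Complex.exp (Complex.I * (γ : ℂ)) •
            ((NormedSpace.exp ((Complex.I * (φ : ℂ)) • N1op)
              * NormedSpace.exp ((Complex.I * (θ : ℂ)) • Aop)).mulVec e0)
          = α • e0 + β • e3) := by
  constructor
  · intro θ
    rw [expA]
    funext i
    fin_cases i <;>
      simp [Matrix.mulVec, dotProduct, Fin.sum_univ_four, e0, e3, Pi.single,
        Matrix.vecHead, Matrix.vecTail, Function.update]
  · intro α β h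
    have hvec : ∀ φ θ : ℝ,
        ((NormedSpace.exp ((Complex.I * (φ : ℂ)) • N1op)
          * NormedSpace.exp ((Complex.I * (θ : ℂ)) • Aop)).mulVec e0)
        = ((Real.cos θ : ℂ)) • e0
          + (Complex.exp (Complex.I*(φ:ℂ)) * -(Complex.I * (Real.sin θ : ℂ))) • e3 := by
      intro φ θ
      rw [expA, expN]
      funext i
      fin_cases i <;>
        simp [Matrix.mulVec, dotProduct, Fin.sum_univ_four, e0, e3, Pi.single,
          Matrix.vecHead, Matrix.vecTail, Function.update, Matrix.mul_apply] <;> ring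
    have hα : ‖α‖ ≤ 1 := by nlinarith [norm_nonneg α, norm_nonneg β]
    refine ⟨Complex.arg α, Complex.arg β - Complex.arg α + Real.pi/2,
      Real.arccos ‖α‖, ?_⟩
    set θ := Real.arccos ‖α‖ with hθ
    have hcos : Real.cos θ = ‖α‖ :=
      Real.cos_arccos (by linarith [norm_nonneg α]) hα
    have hsin : Real.sin θ = ‖β‖ := by
      rw [hθ, Real.sin_arccos]
      rw [show 1 - ‖α‖ ^ 2 = ‖β‖ ^ 2 by linarith]
      exact Real.sqrt_sq (norm_nonneg β)
    have hA : Complex.exp (Complex.I * (Complex.arg α : ℂ)) * (Real.cos θ : ℂ) = α := by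
      rw [hcos, mul_comm]
      rw [mul_comm Complex.I]
      exact_mod_cast Complex.norm_mul_exp_arg_mul_I α
    have hB : Complex.exp (Complex.I * (Complex.arg α : ℂ)) *
        (Complex.exp (Complex.I * ((Complex.arg β - Complex.arg α + Real.pi/2 : ℝ) : ℂ)) *
          (-(Complex.I * (Real.sin θ : ℂ)))) = β := by
      rw [hsin, ← mul_assoc, ← Complex.exp_add]
      have h2 : Complex.I * (Complex.arg α : ℂ)
          + Complex.I * ((Complex.arg β - Complex.arg α + Real.pi/2 : ℝ) : ℂ)
          = (Complex.arg β : ℂ) * Complex.I + (Real.pi/2 : ℝ) * Complex.I := by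
        push_cast; ring
      have hpi : Complex.exp (((Real.pi/2 : ℝ) : ℂ) * Complex.I) = Complex.I := by
        rw [Complex.exp_mul_I, ← Complex.ofReal_cos, ← Complex.ofReal_sin,
          Real.cos_pi_div_two, Real.sin_pi_div_two]
        simp
      rw [h2, Complex.exp_add, hpi]
      have hb : Complex.exp ((Complex.arg β : ℂ) * Complex.I) * (‖β‖ : ℂ) = β := by
        rw [mul_comm]; exact Complex.norm_mul_exp_arg_mul_I β
      calc Complex.exp ((Complex.arg β : ℂ) * Complex.I) * Complex.I
            * (-(Complex.I * (‖β‖ : ℂ)))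
          = Complex.exp ((Complex.arg β : ℂ) * Complex.I) * (‖β‖ : ℂ)
            * (-(Complex.I * Complex.I)) := by ring
        _ = β := by rw [Complex.I_mul_I, hb]; ring
    rw [hvec, smul_add, smul_smul, smul_smul, hA, hB]
end

section
/- Let p and a be real numbers with 0 < p ≤ a < 1. Then the Kullback–Leibler divergence satisfies D(a ‖ p) = a·log(a/p) + (1−a)·log((1−a)/(1−p)) ≥ (a − p)² / (2a). -/
theorem stmt_15 (p a : ℝ) (hp : 0 < p) (hpa : p ≤ a) (ha : a < 1) :
    (a - p) ^ 2 / (2 * a)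
      ≤ a * Real.log (a / p) + (1 - a) * Real.log ((1 - a) / (1 - p)) := by
  have ha0 : 0 < a := lt_of_lt_of_le hp hpa
  have ha1 : 0 < 1 - a := by linarith
  have hp1 : 0 < 1 - p := by linarith
  rcases eq_or_lt_of_le hpa with rfl | hlt
  · rw [div_self ha0.ne', div_self ha1.ne', Real.log_one]
    simp
  -- f x = a*(log a - log x) + (1-a)*(log(1-a) - log(1-x)) - (a-x)^2/(2a)
  set f : ℝ → ℝ := fun x =>
    a * (Real.log a - Real.log x) + (1 - a) * (Real.log (1 - a) - Real.log (1 - x))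
      - (a - x) ^ 2 / (2 * a) with hf
  have hderiv : ∀ x ∈ Set.Ioo p a, HasDerivAt f
      (a * (0 - x⁻¹) + (1 - a) * (0 - (-1 * (1 - x)⁻¹)) - (2 * (a - x) * -1) / (2 * a)) x := by
    intro x hx
    have hx0 : x ≠ 0 := (lt_trans hp hx.1).ne'
    have hx1 : (1 : ℝ) - x ≠ 0 := by
      have : x < 1 := lt_trans hx.2 ha
      intro h; linarith [h]
    have h1 : HasDerivAt (fun x : ℝ => Real.log a - Real.log x) (0 - x⁻¹) x :=
      (hasDerivAt_const x (Real.log a)).sub (Real.hasDerivAt_log hx0)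
    have h2 : HasDerivAt (fun x : ℝ => Real.log (1 - x)) (-1 * (1 - x)⁻¹) x := by
      have := (Real.hasDerivAt_log hx1).comp x
        (((hasDerivAt_const x (1:ℝ)).sub (hasDerivAt_id x)))
      exact this.congr_deriv (by ring)
    have h3 : HasDerivAt (fun x : ℝ => Real.log (1 - a) - Real.log (1 - x))
        (0 - (-1 * (1 - x)⁻¹)) x :=
      (hasDerivAt_const x (Real.log (1 - a))).sub h2
    have h4 : HasDerivAt (fun x : ℝ => (a - x) ^ 2 / (2 * a))
        ((2 * (a - x) * -1) / (2 * a)) x := by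
      have h5 : HasDerivAt (fun x : ℝ => (a - x) ^ 2) (2 * (a - x) * -1) x := by
        have := (((hasDerivAt_const x a).sub (hasDerivAt_id x)).pow 2)
        exact this.congr_deriv (by norm_num)
      exact h5.div_const (2 * a)
    exact ((h1.const_mul a).add (h3.const_mul (1 - a))).sub h4
  have hanti : AntitoneOn f (Set.Icc p a) := by
    apply antitoneOn_of_deriv_nonpos (convex_Icc p a)
    · -- continuity on Icc
      have hlog1 : ContinuousOn (fun x : ℝ => Real.log x) (Set.Icc p a) :=
        Real.continuousOn_log.mono (fun x hx => by
          simp only [Set.mem_Icc] at hx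
          simp only [Set.mem_compl_iff, Set.mem_singleton_iff]
          exact (lt_of_lt_of_le hp hx.1).ne')
      have hlog2 : ContinuousOn (fun x : ℝ => Real.log (1 - x)) (Set.Icc p a) :=
        Real.continuousOn_log.comp (continuousOn_const.sub continuousOn_id) (fun x hx => by
          simp only [Set.mem_Icc] at hx
          simp only [Set.mem_compl_iff, Set.mem_singleton_iff, id]
          have : x < 1 := lt_of_le_of_lt hx.2 ha
          intro h; linarith)
      exact ((continuousOn_const.mul (continuousOn_const.sub hlog1)).add
        (continuousOn_const.mul (continuousOn_const.sub hlog2))).sub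
        (((continuousOn_const.sub continuousOn_id).pow 2).div_const (2 * a))
    · rw [interior_Icc]
      intro x hx
      exact ((hderiv x hx).differentiableAt).differentiableWithinAt
    · rw [interior_Icc]
      intro x hx
      rw [(hderiv x hx).deriv]
      have hx0 : 0 < x := lt_trans hp hx.1
      have hx1 : 0 < 1 - x := by have := lt_trans hx.2 ha; linarith
      have key : a * (0 - x⁻¹) + (1 - a) * (0 - (-1 * (1 - x)⁻¹)) - (2 * (a - x) * -1) / (2 * a)
          = (a - x) * (x * (1 - x) - a) / (a * (x * (1 - x))) := by
        field_simp
        ring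
      rw [key]
      apply div_nonpos_of_nonpos_of_nonneg
      · apply mul_nonpos_of_nonneg_of_nonpos
        · linarith [hx.2]
        · nlinarith [hx.2, hx0, hx1]
      · positivity
  have h0 := hanti (Set.left_mem_Icc.2 hpa) (Set.right_mem_Icc.2 hpa) hpa
  have hfa : f a = 0 := by simp [hf]
  rw [hfa] at h0
  have hfp : 0 ≤ f p := h0
  rw [hf] at hfp
  simp only at hfp
  rw [Real.log_div ha0.ne' hp.ne', Real.log_div ha1.ne' hp1.ne']
  linarith [hfp]
end
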